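/- arXiv:2401.05523 — 3 statements merged into one kernel-verified Lean document; each statement's English description precedes it below -/
import Mathlib

section
/- Let G be a König-Egerváry graph and v ∈ V(G) such that G - v is also König-Egerváry. Then v ∈ core(G) if and only if there exists a maximum matching of G that does not saturate v. -/
open SimpleGraph

variable {V : Type*}

/-- A set of vertices is independent: no two of its vertices are adjacent. -/
def IsIndep (G : SimpleGraph V) (s : Set V) : Prop :=
  s.Pairwise fun a b => ¬ G.Adj a b

/-- The independence number α(G). -/
noncomputable def alphaNum (G : SimpleGraph V) : ℕ :=
  sSup {n | ∃ s : Set V, IsIndep G s ∧ s.ncard = n}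

/-- The matching number μ(G). -/
noncomputable def muNum (G : SimpleGraph V) : ℕ :=
  sSup {n | ∃ M : SimpleGraph.Subgraph G, M.IsMatching ∧ M.edgeSet.ncard = n}

/-- The neighborhood N(A) of a set of vertices. -/
def nbhd (G : SimpleGraph V) (A : Set V) : Set V := {v | ∃ a ∈ A, G.Adj a v}

/-- The difference d(A) = |A| - |N(A)| of a set of vertices. -/
noncomputable def diffSet (G : SimpleGraph V) (A : Set V) : ℤ :=
  (A.ncard : ℤ) - (nbhd G A).ncard

/-- The critical difference d(G). -/
noncomputable def critDiff (G : SimpleGraph V) : ℤ :=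
  sSup {d | ∃ I : Set V, IsIndep G I ∧ diffSet G I = d}

/-- A critical independent set: an independent set attaining the critical difference. -/
def IsCriticalIndep (G : SimpleGraph V) (A : Set V) : Prop :=
  IsIndep G A ∧ diffSet G A = critDiff G

/-- ker(G): the intersection of all critical independent sets. -/
noncomputable def kerSet (G : SimpleGraph V) : Set V :=
  ⋂₀ {A | IsCriticalIndep G A}

/-- A maximum independent set. -/
noncomputable def IsMaxIndep (G : SimpleGraph V) (S : Set V) : Prop :=
  IsIndep G S ∧ S.ncard = alphaNum G

/-- core(G): the intersection of all maximum independent sets. -/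
noncomputable def coreSet (G : SimpleGraph V) : Set V :=
  ⋂₀ {S | IsMaxIndep G S}

/-- A König–Egerváry graph: α(G) + μ(G) = n(G). -/
def KonigEgervary (G : SimpleGraph V) : Prop :=
  alphaNum G + muNum G = Nat.card V

section Aux
variable [Fintype V] {G : SimpleGraph V}

lemma alpha_bdd : BddAbove {n | ∃ s : Set V, IsIndep G s ∧ s.ncard = n} := by
  refine ⟨Nat.card V, fun n hn => ?_⟩
  obtain ⟨s, _, rfl⟩ := hn
  simpa [Set.ncard_univ] using Set.ncard_le_ncard (Set.subset_univ s) Set.finite_univ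

lemma ncard_le_alpha {s : Set V} (h : IsIndep G s) : s.ncard ≤ alphaNum G :=
  le_csSup alpha_bdd ⟨s, h, rfl⟩

lemma exists_maxIndep (G : SimpleGraph V) [Fintype V] : ∃ S, IsMaxIndep G S := by
  have hne : {n | ∃ s : Set V, IsIndep G s ∧ s.ncard = n}.Nonempty :=
    ⟨0, ∅, by simp [IsIndep], by simp⟩
  obtain ⟨s, hs, hcard⟩ := Nat.sSup_mem hne alpha_bdd
  exact ⟨s, hs, hcard⟩

lemma mu_bdd : BddAbove {n | ∃ M : SimpleGraph.Subgraph G, M.IsMatching ∧ M.edgeSet.ncard = n} := by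
  classical
  refine ⟨Nat.card (Sym2 V), fun n hn => ?_⟩
  obtain ⟨M, _, rfl⟩ := hn
  simpa [Set.ncard_univ] using Set.ncard_le_ncard (Set.subset_univ M.edgeSet) Set.finite_univ

lemma ncard_le_mu {M : SimpleGraph.Subgraph G} (h : M.IsMatching) :
    M.edgeSet.ncard ≤ muNum G :=
  le_csSup mu_bdd ⟨M, h, rfl⟩

lemma exists_maxMatching (G : SimpleGraph V) [Fintype V] :
    ∃ M : SimpleGraph.Subgraph G, M.IsMatching ∧ M.edgeSet.ncard = muNum G := by
  have hne : {n | ∃ M : SimpleGraph.Subgraph G, M.IsMatching ∧ M.edgeSet.ncard = n}.Nonempty :=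
    ⟨0, ⊥, by simp [SimpleGraph.Subgraph.IsMatching], by simp⟩
  obtain ⟨M, hM, hcard⟩ := Nat.sSup_mem hne mu_bdd
  exact ⟨M, hM, hcard⟩

lemma edgeSet_map' {W : Type*} {G2 : SimpleGraph W} (f : G →g G2) (H : G.Subgraph) :
    (H.map f).edgeSet = Sym2.map f '' H.edgeSet := by
  ext e
  induction e using Sym2.ind with
  | _ x y =>
    simp only [SimpleGraph.Subgraph.mem_edgeSet, SimpleGraph.Subgraph.map_adj, Relation.Map,
      Set.mem_image, Sym2.exists, Sym2.map_pair_eq, Sym2.eq_iff]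
    constructor
    · rintro ⟨a, b, hab, rfl, rfl⟩
      exact ⟨a, b, hab, Or.inl ⟨rfl, rfl⟩⟩
    · rintro ⟨a, b, hab, (⟨rfl, rfl⟩ | ⟨rfl, rfl⟩)⟩
      · exact ⟨a, b, hab, rfl, rfl⟩
      · exact ⟨b, a, hab.symm, rfl, rfl⟩

/-- Restriction of a subgraph avoiding the complement of `s` to the induced graph on `s`. -/
def restrSubgraph (s : Set V) (M : SimpleGraph.Subgraph G) (h : M.verts ⊆ s) :
    (G.induce s).Subgraph where
  verts := Subtype.val ⁻¹' M.verts
  Adj a b := M.Adj ↑a ↑b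
  adj_sub := fun hab => by simpa using M.adj_sub hab
  edge_vert := fun hab => M.edge_vert hab
  symm := ⟨fun a b hab => M.adj_symm hab⟩

lemma restrSubgraph_isMatching {s : Set V} {M : SimpleGraph.Subgraph G} (h : M.verts ⊆ s)
    (hM : M.IsMatching) : (restrSubgraph s M h).IsMatching := by
  rintro ⟨x, hxs⟩ hx
  obtain ⟨w, hw, hu⟩ := hM hx
  refine ⟨⟨w, h (M.edge_vert hw.symm)⟩, hw, ?_⟩
  rintro ⟨y, hys⟩ hadj
  exact Subtype.ext (hu y hadj)

lemma restrSubgraph_edgeSet {s : Set V} {M : SimpleGraph.Subgraph G} (h : M.verts ⊆ s) :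
    Sym2.map (Subtype.val : s → V) '' (restrSubgraph s M h).edgeSet = M.edgeSet := by
  ext e
  induction e using Sym2.ind with
  | _ x y =>
    simp only [Set.mem_image, Sym2.exists, SimpleGraph.Subgraph.mem_edgeSet, Sym2.map_pair_eq,
      Sym2.eq_iff]
    constructor
    · rintro ⟨a, b, hab, (⟨rfl, rfl⟩ | ⟨rfl, rfl⟩)⟩
      · exact hab
      · exact hab.symm
    · intro hab
      have hx : x ∈ s := h (M.edge_vert hab)
      have hy : y ∈ s := h (M.edge_vert hab.symm)
      exact ⟨⟨x, hx⟩, ⟨y, hy⟩, hab, Or.inl ⟨rfl, rfl⟩⟩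

lemma isIndep_image_iff {s : Set V} (T : Set s) :
    IsIndep G (Subtype.val '' T) ↔ IsIndep (G.induce s) T := by
  constructor
  · rintro h a ha b hb hne
    have := h (Set.mem_image_of_mem _ ha) (Set.mem_image_of_mem _ hb)
      (fun hh => hne (Subtype.ext hh))
    simpa using this
  · rintro h a ⟨a', ha', rfl⟩ b ⟨b', hb', rfl⟩ hne hadj
    exact h ha' hb' (fun hh => hne (congrArg _ hh)) (by simpa using hadj)

end Aux

theorem stmt_13 [Fintype V] (G : SimpleGraph V) (hKE : KonigEgervary G) (v : V)
    (hKEv : KonigEgervary (G.induce ({v}ᶜ : Set V))) :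
    v ∈ coreSet G ↔
      ∃ M : SimpleGraph.Subgraph G, M.IsMatching ∧ M.edgeSet.ncard = muNum G ∧ v ∉ M.verts := by
  classical
  set s : Set V := ({v}ᶜ : Set V) with hs
  have hn : 1 + s.ncard = Nat.card V := by
    have := Set.ncard_add_ncard_compl ({v} : Set V)
    simpa [hs] using this
  have hNc : Nat.card ↥s = s.ncard := Nat.card_coe_set_eq _
  unfold KonigEgervary at hKE hKEv
  rw [hNc] at hKEv
  constructor
  · intro hv
    simp only [coreSet, Set.mem_sInter, Set.mem_setOf_eq] at hv
    -- lower bound: α(G) ≤ α((G.induce s)) + 1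
    obtain ⟨S, hSi, hScard⟩ := exists_maxIndep G
    have hvS : v ∈ S := hv S ⟨hSi, hScard⟩
    have hge : alphaNum G ≤ alphaNum (G.induce s) + 1 := by
      set T : Set ↥s := {x | ↑x ∈ S} with hT
      have hTim : Subtype.val '' T = S \ {v} := by
        ext x
        simp only [Set.mem_image, Set.mem_setOf_eq, Set.mem_diff, Set.mem_singleton_iff, hT]
        constructor
        · rintro ⟨⟨x', hx'⟩, hxS, rfl⟩
          exact ⟨hxS, hx'⟩
        · rintro ⟨hxS, hne⟩
          exact ⟨⟨x, hne⟩, hxS, rfl⟩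
      have hTi : IsIndep (G.induce s) T := by
        refine (isIndep_image_iff T).mp ?_
        rw [hTim]
        exact hSi.mono Set.diff_subset
      have h1 : (S \ {v}).ncard + 1 = S.ncard := Set.ncard_diff_singleton_add_one hvS
      have h2 : T.ncard = (S \ {v}).ncard := by
        rw [← hTim, Set.ncard_image_of_injective _ Subtype.val_injective]
      have h3 := ncard_le_alpha hTi
      omega
    -- upper bound: α((G.induce s)) < α(G)
    obtain ⟨T', hT'i, hT'card⟩ := exists_maxIndep (G.induce s)
    have hS' : IsIndep G (Subtype.val '' T') := (isIndep_image_iff T').mpr hT'i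
    have hcard' : (Subtype.val '' T').ncard = alphaNum (G.induce s) := by
      rw [Set.ncard_image_of_injective _ Subtype.val_injective]; exact hT'card
    have hne : alphaNum (G.induce s) ≠ alphaNum G := by
      intro he
      have hmax : IsMaxIndep G (Subtype.val '' T') := ⟨hS', by rw [hcard', he]⟩
      obtain ⟨x, _, hx⟩ := hv _ hmax
      exact x.2 (Set.mem_singleton_iff.mpr hx)
    have hle : alphaNum (G.induce s) ≤ alphaNum G := by
      have := ncard_le_alpha hS'
      omega
    have hmu : muNum (G.induce s) = muNum G := by omega
    obtain ⟨M', hM'm, hM'card⟩ := exists_maxMatching (G.induce s)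
    let f : (G.induce s) ↪g G := SimpleGraph.Embedding.induce s
    have hfi : Function.Injective ⇑f.toHom := f.injective
    refine ⟨M'.map f.toHom, SimpleGraph.Subgraph.IsMatching.map _ hfi hM'm, ?_, ?_⟩
    · rw [edgeSet_map', Set.ncard_image_of_injective _ (Sym2.map.injective hfi), hM'card, hmu]
    · intro hvm
      rw [SimpleGraph.Subgraph.map_verts] at hvm
      obtain ⟨x, _, hx⟩ := hvm
      have hxv : (x : V) = v := hx
      exact x.2 (Set.mem_singleton_iff.mpr hxv)
  · rintro ⟨M, hMm, hMcard, hvM⟩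
    have hsub : M.verts ⊆ s := fun x hx hxv => hvM ((Set.eq_of_mem_singleton hxv) ▸ hx)
    have hM' := restrSubgraph_isMatching hsub hMm
    have hcardR : (restrSubgraph s M hsub).edgeSet.ncard = M.edgeSet.ncard := by
      rw [← restrSubgraph_edgeSet hsub,
        Set.ncard_image_of_injective _ (Sym2.map.injective Subtype.val_injective)]
    have hmu_le : muNum G ≤ muNum (G.induce s) := by
      have := ncard_le_mu hM'
      omega
    simp only [coreSet, Set.mem_sInter, Set.mem_setOf_eq]
    intro S hS
    by_contra hvS
    have hSsub : S ⊆ s := fun x hx hxv => hvS ((Set.eq_of_mem_singleton hxv) ▸ hx)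
    set T : Set ↥s := {x | ↑x ∈ S} with hT
    have hTim : Subtype.val '' T = S := by
      ext x
      simp only [Set.mem_image, Set.mem_setOf_eq, hT]
      constructor
      · rintro ⟨⟨x', hx'⟩, hxS, rfl⟩
        exact hxS
      · intro hxS
        exact ⟨⟨x, hSsub hxS⟩, hxS, rfl⟩
    have hTi : IsIndep (G.induce s) T := (isIndep_image_iff T).mp (by rw [hTim]; exact hS.1)
    have hTcard : T.ncard = S.ncard := by
      rw [← hTim, Set.ncard_image_of_injective _ Subtype.val_injective]
    have halpha : alphaNum G ≤ alphaNum (G.induce s) := by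
      have := ncard_le_alpha hTi
      have h2 := hS.2
      omega
    omega
end

section
/- If G is a König-Egerváry graph and v ∈ core(G) - ker(G), then G - v is not a König-Egerváry graph; moreover α(G-v) + μ(G-v) = n(G-v) - 1. -/
open SimpleGraph

variable {V : Type*}

/-! ### auxiliary lemmas -/

section Aux

lemma aux_indep_bdd [Fintype V] (G : SimpleGraph V) :
    BddAbove {n | ∃ s : Set V, IsIndep G s ∧ s.ncard = n} := by
  refine ⟨Fintype.card V, ?_⟩
  rintro n ⟨s, -, rfl⟩
  simpa [Set.ncard_univ] using Set.ncard_le_ncard (Set.subset_univ s) Set.finite_univ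

lemma aux_ncard_le_alpha [Fintype V] {G : SimpleGraph V} {s : Set V} (h : IsIndep G s) :
    s.ncard ≤ alphaNum G :=
  le_csSup (aux_indep_bdd G) ⟨s, h, rfl⟩

lemma aux_exists_maxIndep [Fintype V] (G : SimpleGraph V) :
    ∃ S : Set V, IsIndep G S ∧ S.ncard = alphaNum G := by
  have hne : {n | ∃ s : Set V, IsIndep G s ∧ s.ncard = n}.Nonempty :=
    ⟨0, ∅, by simp [IsIndep], by simp⟩
  exact Nat.sSup_mem hne (aux_indep_bdd G)

lemma aux_matching_bdd [Fintype V] (G : SimpleGraph V) :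
    BddAbove {n | ∃ M : SimpleGraph.Subgraph G, M.IsMatching ∧ M.edgeSet.ncard = n} := by
  classical
  refine ⟨Fintype.card (Sym2 V), ?_⟩
  rintro n ⟨M, -, rfl⟩
  simpa [Set.ncard_univ, Nat.card_eq_fintype_card] using
    Set.ncard_le_ncard (Set.subset_univ M.edgeSet) Set.finite_univ

lemma aux_ncard_le_mu [Fintype V] {G : SimpleGraph V} {M : SimpleGraph.Subgraph G}
    (h : M.IsMatching) : M.edgeSet.ncard ≤ muNum G :=
  le_csSup (aux_matching_bdd G) ⟨M, h, rfl⟩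

lemma aux_exists_maxMatching [Fintype V] (G : SimpleGraph V) :
    ∃ M : SimpleGraph.Subgraph G, M.IsMatching ∧ M.edgeSet.ncard = muNum G := by
  have hne : {n | ∃ M : SimpleGraph.Subgraph G, M.IsMatching ∧ M.edgeSet.ncard = n}.Nonempty :=
    ⟨0, ⊥, by intro v hv; simp at hv, by simp⟩
  exact Nat.sSup_mem hne (aux_matching_bdd G)

lemma aux_matching_verts_ncard [Fintype V] {G : SimpleGraph V}
    {M : SimpleGraph.Subgraph G} (h : M.IsMatching) :
    M.verts.ncard = 2 * M.edgeSet.ncard := by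
  classical
  have hcard := Finset.card_eq_sum_card_fiberwise
    (f := fun v : M.verts => h.toEdge v) (s := Finset.univ) (t := Finset.univ)
    (fun x _ => Finset.mem_univ _)
  have hfib : ∀ e : M.edgeSet,
      (Finset.univ.filter fun a : M.verts => h.toEdge a = e).card = 2 := by
    rintro ⟨es, he⟩
    induction es with
    | _ a b =>
      have hab : M.Adj a b := (SimpleGraph.Subgraph.mem_edgeSet).mp he
      have ha : a ∈ M.verts := M.edge_vert hab
      have hb : b ∈ M.verts := M.edge_vert hab.symm
      have hne : a ≠ b := (M.adj_sub hab).ne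
      have hset : (Finset.univ.filter fun x : M.verts => h.toEdge x = ⟨s(a,b), he⟩)
          = {⟨a, ha⟩, ⟨b, hb⟩} := by
        ext ⟨x, hx⟩
        simp only [Finset.mem_filter, Finset.mem_univ, true_and, Finset.mem_insert,
          Finset.mem_singleton, Subtype.mk.injEq]
        constructor
        · intro hx'
          obtain ⟨w, hw, -⟩ := h hx
          have := h.toEdge_eq_of_adj hw
          rw [this] at hx'
          have : s(x, w) = s(a, b) := congrArg Subtype.val hx'
          have hmem : x ∈ s(a,b) := by rw [← this]; exact Sym2.mem_mk_left x w
          rcases Sym2.mem_iff.mp hmem with h1 | h1 <;> simp [h1]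
        · rintro (rfl | rfl)
          · exact h.toEdge_eq_of_adj hab
          · rw [h.toEdge_eq_of_adj hab.symm]
            exact Subtype.ext (Sym2.eq_swap)
      rw [hset]
      rw [Finset.card_insert_of_notMem (by simp [hne]), Finset.card_singleton]
  rw [Finset.sum_congr rfl (fun e _ => hfib e)] at hcard
  simp only [Finset.sum_const, Finset.card_univ, smul_eq_mul] at hcard
  have h1 : M.verts.ncard = Fintype.card M.verts := by
    rw [Set.ncard_eq_toFinset_card', Set.toFinset_card]
  have h2 : M.edgeSet.ncard = Fintype.card M.edgeSet := by
    rw [Set.ncard_eq_toFinset_card', Set.toFinset_card]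
  omega

/-- In a KE graph, the critical difference is at least α - μ. -/
lemma aux_critDiff_ge [Fintype V] (G : SimpleGraph V) (hKE : KonigEgervary G) :
    (alphaNum G : ℤ) - muNum G ≤ critDiff G := by
  classical
  obtain ⟨S, hSi, hScard⟩ := aux_exists_maxIndep G
  have hdisj : Disjoint S (nbhd G S) := by
    rw [Set.disjoint_left]
    rintro x hxS ⟨a, haS, hadj⟩
    rcases eq_or_ne a x with rfl | hne
    · exact G.irrefl hadj
    · exact hSi haS hxS hne hadj
  have hsub : nbhd G S ⊆ Sᶜ := fun x hx => (Set.disjoint_right.mp hdisj hx)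
  have hcompl : S.ncard + Sᶜ.ncard = Fintype.card V := by
    simpa [Set.ncard_univ, Nat.card_eq_fintype_card] using Set.ncard_add_ncard_compl S
  have hN : (nbhd G S).ncard ≤ Sᶜ.ncard := Set.ncard_le_ncard hsub (Set.toFinite _)
  have hKE' : alphaNum G + muNum G = Fintype.card V := by
    simpa [KonigEgervary, Nat.card_eq_fintype_card] using hKE
  have hd : (alphaNum G : ℤ) - muNum G ≤ diffSet G S := by
    simp only [diffSet, hScard]
    omega
  refine le_trans hd (le_csSup ?_ ⟨S, hSi, rfl⟩)
  refine ⟨(Fintype.card V : ℤ), ?_⟩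
  rintro d ⟨I, -, rfl⟩
  have hI : I.ncard ≤ Fintype.card V := by
    simpa [Set.ncard_univ, Nat.card_eq_fintype_card] using
      Set.ncard_le_ncard (Set.subset_univ I) Set.finite_univ
  simp only [diffSet]
  omega

/-- Key counting lemma: if a maximum matching misses `v`, then `v` belongs to every
critical independent set. -/
lemma aux_key [Fintype V] (G : SimpleGraph V) (hKE : KonigEgervary G)
    {A : Set V} (hA : IsCriticalIndep G A)
    {M : SimpleGraph.Subgraph G} (hM : M.IsMatching) (hMcard : M.edgeSet.ncard = muNum G)
    {v : V} (hvM : v ∉ M.verts) : v ∈ A := by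
  classical
  obtain ⟨hAi, hAd⟩ := hA
  have hge : (alphaNum G : ℤ) - muNum G ≤ diffSet G A := hAd ▸ aux_critDiff_ge G hKE
  set W := M.verts with hW
  let f : V → V := fun a => if h : a ∈ M.verts then (hM h).choose else a
  have hfadj : ∀ a ∈ A ∩ W, M.Adj a (f a) := by
    intro a ha
    simp only [f]
    rw [dif_pos ha.2]
    exact (hM ha.2).choose_spec.1
  have hfim : f '' (A ∩ W) ⊆ nbhd G A := by
    rintro _ ⟨a, ha, rfl⟩
    exact ⟨a, ha.1, M.adj_sub (hfadj a ha)⟩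
  have hinj : Set.InjOn f (A ∩ W) := by
    intro a ha b hb hab
    have h1 : M.Adj (f a) a := (hfadj a ha).symm
    have h2 : M.Adj (f a) b := hab ▸ (hfadj b hb).symm
    have hfv : f a ∈ M.verts := M.edge_vert h1
    obtain ⟨w, -, hu⟩ := hM hfv
    rw [hu a h1, hu b h2]
  have hc1 : (A ∩ W).ncard ≤ (nbhd G A).ncard := by
    rw [← Set.ncard_image_of_injOn hinj]
    exact Set.ncard_le_ncard hfim (Set.toFinite _)
  have hc2 : (A ∩ W).ncard + (A \ W).ncard = A.ncard :=
    Set.ncard_inter_add_ncard_diff_eq_ncard A W (Set.toFinite _)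
  have hc3 : (A \ W).ncard ≤ Wᶜ.ncard :=
    Set.ncard_le_ncard (fun x hx => hx.2) (Set.toFinite _)
  have hc4 : W.ncard + Wᶜ.ncard = Fintype.card V := by
    simpa [Set.ncard_univ, Nat.card_eq_fintype_card] using Set.ncard_add_ncard_compl W
  have hWcard : W.ncard = 2 * muNum G := by
    rw [hW, aux_matching_verts_ncard hM, hMcard]
  have hKE' : alphaNum G + muNum G = Fintype.card V := by
    simpa [KonigEgervary, Nat.card_eq_fintype_card] using hKE
  have heq : Wᶜ.ncard ≤ (A \ W).ncard := by
    simp only [diffSet] at hge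
    omega
  have hAW : A \ W = Wᶜ :=
    Set.eq_of_subset_of_ncard_le (fun x hx => hx.2) heq (Set.toFinite _)
  have hvA : v ∈ A \ W := by rw [hAW]; exact hvM
  exact hvA.1

/-- edge set of a mapped subgraph. -/
lemma aux_edgeSet_map {W : Type*} {G : SimpleGraph V} {G' : SimpleGraph W}
    (f : G →g G') (M : SimpleGraph.Subgraph G) :
    (M.map f).edgeSet = Sym2.map f '' M.edgeSet := by
  ext e
  induction e with
  | _ x y =>
    simp only [SimpleGraph.Subgraph.mem_edgeSet, SimpleGraph.Subgraph.map_adj,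
      Relation.Map, Set.mem_image]
    constructor
    · rintro ⟨a, b, hab, rfl, rfl⟩
      exact ⟨s(a,b), (SimpleGraph.Subgraph.mem_edgeSet).mpr hab, rfl⟩
    · rintro ⟨e', he', hmap⟩
      induction e' with
      | _ a b =>
        rw [Sym2.map_pair_eq] at hmap
        have hab : M.Adj a b := (SimpleGraph.Subgraph.mem_edgeSet).mp he'
        rcases Sym2.eq_iff.mp hmap with ⟨h1, h2⟩ | ⟨h1, h2⟩
        · exact ⟨a, b, hab, h1, h2⟩
        · exact ⟨b, a, hab.symm, h2, h1⟩

/-- The restriction of a subgraph whose vertices lie in `A` to the induced graph on `A`. -/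
def restrictSub (G : SimpleGraph V) (A : Set V) (M : SimpleGraph.Subgraph G)
    (hMA : M.verts ⊆ A) : SimpleGraph.Subgraph (G.induce A) where
  verts := Subtype.val ⁻¹' M.verts
  Adj a b := M.Adj ↑a ↑b
  adj_sub := fun {a b} h => by exact M.adj_sub h
  edge_vert := fun {a b} h => M.edge_vert h
  symm := ⟨fun a b h => M.adj_symm h⟩

lemma restrictSub_adj {G : SimpleGraph V} {A : Set V} {M : SimpleGraph.Subgraph G}
    {hMA : M.verts ⊆ A} {a b : A} :
    (restrictSub G A M hMA).Adj a b ↔ M.Adj ↑a ↑b := Iff.rfl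

/-- restriction of a subgraph avoiding the removed set to the induced graph -/
lemma aux_restrict {A : Set V} {G : SimpleGraph V} (M : SimpleGraph.Subgraph G)
    (hM : M.IsMatching) (hMA : M.verts ⊆ A) :
    ∃ M' : SimpleGraph.Subgraph (G.induce A), M'.IsMatching ∧
      M'.edgeSet.ncard = M.edgeSet.ncard := by
  classical
  refine ⟨restrictSub G A M hMA, ?_, ?_⟩
  · intro a ha
    obtain ⟨w, hw, hu⟩ := hM ha
    have hwA : w ∈ A := hMA (M.edge_vert hw.symm)
    refine ⟨⟨w, hwA⟩, hw, ?_⟩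
    intro b hb
    exact Subtype.ext (hu ↑b hb)
  · have himg : Sym2.map (Subtype.val : A → V) '' (restrictSub G A M hMA).edgeSet
        = M.edgeSet := by
      ext e
      induction e with
      | _ x y =>
        simp only [Set.mem_image, SimpleGraph.Subgraph.mem_edgeSet]
        constructor
        · rintro ⟨e', he', hmap⟩
          induction e' with
          | _ a b =>
            rw [Sym2.map_pair_eq] at hmap
            have hab : M.Adj ↑a ↑b := he'
            rcases Sym2.eq_iff.mp hmap with ⟨h1, h2⟩ | ⟨h1, h2⟩
            · rw [← h1, ← h2]; exact hab
            · rw [← h1, ← h2]; exact hab.symm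
        · intro hxy
          have hx : x ∈ A := hMA (M.edge_vert hxy)
          have hy : y ∈ A := hMA (M.edge_vert hxy.symm)
          exact ⟨s(⟨x, hx⟩, ⟨y, hy⟩), hxy, rfl⟩
    rw [← himg, Set.ncard_image_of_injective _ (Sym2.map.injective Subtype.val_injective)]

/-- There is a matching avoiding `v` with at least `μ(G) - 1` edges. -/
lemma aux_mu_drop [Fintype V] (G : SimpleGraph V) (v : V) :
    ∃ M : SimpleGraph.Subgraph G, M.IsMatching ∧ v ∉ M.verts ∧
      muNum G - 1 ≤ M.edgeSet.ncard := by
  classical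
  obtain ⟨M₀, hM₀, hcard₀⟩ := aux_exists_maxMatching G
  by_cases hvin : v ∈ M₀.verts
  · obtain ⟨w, hw, huv⟩ := hM₀ hvin
    have hwin : w ∈ M₀.verts := M₀.edge_vert hw.symm
    obtain ⟨w', hw', huw⟩ := hM₀ hwin
    have huw' : ∀ y, M₀.Adj w y → y = v := by
      intro y hy
      rw [huw y hy, ← huw v hw.symm]
    have hvw : v ≠ w := (M₀.adj_sub hw).ne
    -- the two claims: a partner of v is w, a partner of w is v
    have hpv : ∀ x y, M₀.Adj x y → x = v → y = w := by
      rintro x y hxy rfl; exact huv y hxy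
    have hpw : ∀ x y, M₀.Adj x y → x = w → y = v := by
      rintro x y hxy rfl; exact huw' y hxy
    refine ⟨M₀.deleteVerts {v, w}, ?_, ?_, ?_⟩
    · -- matching
      rintro u hu
      rw [SimpleGraph.Subgraph.deleteVerts_verts] at hu
      obtain ⟨hu1, hu2⟩ := hu
      simp only [Set.mem_insert_iff, Set.mem_singleton_iff, not_or] at hu2
      obtain ⟨p, hp, hup⟩ := hM₀ hu1
      have hpv' : p ≠ v := by
        rintro rfl
        exact hu2.2 (hpv p u hp.symm rfl)
      have hpw' : p ≠ w := by
        rintro rfl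
        exact hu2.1 (hpw p u hp.symm rfl)
      refine ⟨p, ?_, ?_⟩
      · show (M₀.deleteVerts {v, w}).Adj u p
        rw [SimpleGraph.Subgraph.deleteVerts_adj]
        exact ⟨hu1, by simp [hu2.1, hu2.2], M₀.edge_vert hp.symm, by simp [hpv', hpw'], hp⟩
      · intro y hy
        rw [SimpleGraph.Subgraph.deleteVerts_adj] at hy
        exact hup y hy.2.2.2.2
    · rw [SimpleGraph.Subgraph.deleteVerts_verts]
      rintro ⟨-, h⟩
      simp at h
    · -- edge count
      have hedge : (M₀.deleteVerts {v, w}).edgeSet = M₀.edgeSet \ {s(v, w)} := by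
        ext e
        induction e with
        | _ x y =>
          simp only [SimpleGraph.Subgraph.mem_edgeSet, SimpleGraph.Subgraph.deleteVerts_adj,
            Set.mem_diff, Set.mem_singleton_iff, Set.mem_insert_iff,
            Set.mem_singleton_iff, not_or]
          constructor
          · rintro ⟨-, ⟨hxv, hxw⟩, -, ⟨hyv, hyw⟩, hxy⟩
            refine ⟨hxy, ?_⟩
            intro hcon
            rcases Sym2.eq_iff.mp hcon with ⟨h1, h2⟩ | ⟨h1, h2⟩
            · exact hxv h1
            · exact hxw h1
          · rintro ⟨hxy, hne⟩
            have hxv : x ≠ v := by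
              intro hxe
              have hyw : y = w := hpv x y hxy hxe
              exact hne (by rw [hxe, hyw])
            have hxw : x ≠ w := by
              intro hxe
              have hyv : y = v := hpw x y hxy hxe
              exact hne (by rw [hxe, hyv, Sym2.eq_swap])
            have hyv : y ≠ v := by
              intro hye
              have hxw : x = w := hpv y x hxy.symm hye
              exact hne (by rw [hxw, hye, Sym2.eq_swap])
            have hyw : y ≠ w := by
              intro hye
              have hxv' : x = v := hpw y x hxy.symm hye
              exact hne (by rw [hxv', hye])
            exact ⟨M₀.edge_vert hxy, ⟨hxv, hxw⟩, M₀.edge_vert hxy.symm, ⟨hyv, hyw⟩, hxy⟩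
      rw [hedge, Set.ncard_diff_singleton_of_mem
        ((SimpleGraph.Subgraph.mem_edgeSet).mpr hw), hcard₀]
  · exact ⟨M₀, hM₀, hvin, by omega⟩

end Aux

theorem stmt_15 [Fintype V] (G : SimpleGraph V) (hKE : KonigEgervary G) (v : V)
    (hv : v ∈ coreSet G \ kerSet G) :
    ¬ KonigEgervary (G.induce ({v}ᶜ : Set V)) ∧
    alphaNum (G.induce ({v}ᶜ : Set V)) + muNum (G.induce ({v}ᶜ : Set V)) =
      Nat.card ({v}ᶜ : Set V) - 1 := by
  classical
  obtain ⟨hvcore, hvker⟩ := hv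
  set H := G.induce ({v}ᶜ : Set V) with hH
  -- a critical independent set avoiding v
  have hker' : ¬ ∀ A ∈ {A | IsCriticalIndep G A}, v ∈ A := by
    simpa [kerSet, Set.mem_sInter] using hvker
  push_neg at hker'
  obtain ⟨A, hAcrit, hvA⟩ := hker'
  -- v belongs to every maximum independent set
  have hcore : ∀ S : Set V, IsIndep G S → S.ncard = alphaNum G → v ∈ S := by
    intro S h1 h2
    exact Set.mem_sInter.mp hvcore S ⟨h1, h2⟩
  have halpha1 : 1 ≤ alphaNum G := by
    have h1 : ({v} : Set V).ncard ≤ alphaNum G :=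
      aux_ncard_le_alpha (by simp [IsIndep])
    simpa using h1
  -- α(H) ≤ α(G) - 1
  have hαH_le : alphaNum H + 1 ≤ alphaNum G := by
    obtain ⟨T, hTi, hTcard⟩ := aux_exists_maxIndep H
    have hTim : IsIndep G (Subtype.val '' T) := by
      rintro x hx y hy hxy hadj
      obtain ⟨x', hx', rfl⟩ := hx
      obtain ⟨y', hy', rfl⟩ := hy
      have hne : x' ≠ y' := fun h => hxy (congrArg _ h)
      have : H.Adj x' y' := by
        rw [hH]
        exact hadj
      exact hTi hx' hy' hne this
    have him_card : (Subtype.val '' T).ncard = alphaNum H := by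
      rw [Set.ncard_image_of_injective _ Subtype.val_injective, hTcard]
    have hle : alphaNum H ≤ alphaNum G := him_card ▸ aux_ncard_le_alpha hTim
    rcases lt_or_eq_of_le hle with h | h
    · omega
    · exfalso
      have hvmem : v ∈ Subtype.val '' T := hcore _ hTim (by rw [him_card, h])
      obtain ⟨⟨x, hx⟩, -, hxv⟩ := hvmem
      exact hx hxv
  -- α(G) ≤ α(H) + 1
  have hαH_ge : alphaNum G ≤ alphaNum H + 1 := by
    obtain ⟨S, hSi, hScard⟩ := aux_exists_maxIndep G
    set T : Set ({v}ᶜ : Set V) := Subtype.val ⁻¹' S with hT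
    have hTi : IsIndep H T := by
      rintro x hx y hy hxy hadj
      have hne : (x : V) ≠ (y : V) := fun h => hxy (Subtype.ext h)
      exact hSi hx hy hne hadj
    have hTcard : T.ncard = S.ncard - 1 := by
      have himg : Subtype.val '' T = S \ {v} := by
        ext x
        simp only [hT, Set.mem_image, Set.mem_preimage, Set.mem_diff,
          Set.mem_singleton_iff]
        constructor
        · rintro ⟨⟨x', hx'⟩, hxS, rfl⟩
          exact ⟨hxS, fun h => hx' h⟩
        · rintro ⟨hxS, hxv⟩
          exact ⟨⟨x, by simp [hxv]⟩, hxS, rfl⟩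
      calc T.ncard = (Subtype.val '' T).ncard :=
            (Set.ncard_image_of_injective _ Subtype.val_injective).symm
        _ = (S \ {v}).ncard := by rw [himg]
        _ = S.ncard - 1 :=
            Set.ncard_diff_singleton_of_mem (hcore S hSi hScard)
    have hle := aux_ncard_le_alpha hTi
    omega
  -- μ(H) ≥ μ(G) - 1
  obtain ⟨M1, hM1, hvM1, hM1card⟩ := aux_mu_drop G v
  have hM1A : M1.verts ⊆ ({v}ᶜ : Set V) := by
    intro x hx
    simp only [Set.mem_compl_iff, Set.mem_singleton_iff]
    rintro rfl
    exact hvM1 hx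
  obtain ⟨M1', hM1', hM1'card⟩ := aux_restrict M1 hM1 hM1A
  have hμH_ge : muNum G - 1 ≤ muNum H := by
    have hle' : M1'.edgeSet.ncard ≤ muNum H := aux_ncard_le_mu hM1'
    omega
  -- μ(H) < μ(G)
  obtain ⟨M2', hM2', hM2'card⟩ := aux_exists_maxMatching H
  let ι : H →g G := ⟨Subtype.val, fun {a b} h => h⟩
  have hιinj : Function.Injective ι := Subtype.val_injective
  have hM2 : (M2'.map ι).IsMatching := SimpleGraph.Subgraph.IsMatching.map ι hιinj hM2'
  have hM2card : (M2'.map ι).edgeSet.ncard = muNum H := by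
    rw [aux_edgeSet_map]
    have : Sym2.map ι '' M2'.edgeSet = Sym2.map (Subtype.val) '' M2'.edgeSet := rfl
    rw [this, Set.ncard_image_of_injective _
      (Sym2.map.injective Subtype.val_injective), hM2'card]
  have hvM2 : v ∉ (M2'.map ι).verts := by
    rintro ⟨⟨x, hx⟩, -, hxv⟩
    exact hx hxv
  have hμH_lt : muNum H < muNum G := by
    have hle : muNum H ≤ muNum G := hM2card ▸ aux_ncard_le_mu hM2
    rcases lt_or_eq_of_le hle with h | h
    · exact h
    · exact absurd (aux_key G hKE hAcrit hM2 (by rw [hM2card, h]) hvM2) hvA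
  -- cardinalities
  have hcardV : Nat.card ({v}ᶜ : Set V) = Fintype.card V - 1 := by
    rw [Nat.card_coe_set_eq]
    have h1 : ({v} : Set V).ncard + ({v}ᶜ : Set V).ncard = Fintype.card V := by
      simpa [Set.ncard_univ, Nat.card_eq_fintype_card] using
        Set.ncard_add_ncard_compl ({v} : Set V)
    have h2 : ({v} : Set V).ncard = 1 := Set.ncard_singleton v
    omega
  have hn : alphaNum G + muNum G = Fintype.card V := by
    simpa [KonigEgervary, Nat.card_eq_fintype_card] using hKE
  constructor
  · intro hKH
    rw [KonigEgervary] at hKH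
    omega
  · omega
end

section
/- If G is a König-Egerváry graph and v ∈ ker(G), then G - v is a König-Egerváry graph. -/
open SimpleGraph

variable {V : Type*}

section Aux
open Set

variable {W : Type*} (H : SimpleGraph W)

lemma ncard_le_card [Fintype W] (s : Set W) : s.ncard ≤ Nat.card W := by
  simpa [Set.ncard_univ] using Set.ncard_le_ncard (Set.subset_univ s) Set.finite_univ

lemma indep_ncard_le_alpha [Fintype W] {s : Set W} (hs : IsIndep H s) :
    s.ncard ≤ alphaNum H := by
  show _ ≤ sSup {n | ∃ s : Set W, IsIndep H s ∧ s.ncard = n}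
  have hb : BddAbove {n | ∃ s : Set W, IsIndep H s ∧ s.ncard = n} := by
    apply Set.Finite.bddAbove
    apply Set.Finite.subset (Set.finite_Iic (Nat.card W))
    rintro n ⟨t, -, rfl⟩
    simpa using _root_.ncard_le_card t
  exact le_csSup hb ⟨s, hs, rfl⟩

lemma exists_max_indep [Fintype W] :
    ∃ s : Set W, IsIndep H s ∧ s.ncard = alphaNum H := by
  have hne : {n | ∃ s : Set W, IsIndep H s ∧ s.ncard = n}.Nonempty := ⟨0, ∅, by simp [IsIndep]⟩
  have hfin : {n | ∃ s : Set W, IsIndep H s ∧ s.ncard = n}.Finite := by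
    apply Set.Finite.subset (Set.finite_Iic (Nat.card W))
    rintro n ⟨t, -, rfl⟩
    simpa using _root_.ncard_le_card t
  exact hne.csSup_mem hfin

lemma edgeSet_ncard_le (M : SimpleGraph.Subgraph H) [Fintype W] :
    M.edgeSet.ncard ≤ Nat.card (Sym2 W) := by
  simpa [Set.ncard_univ] using Set.ncard_le_ncard (Set.subset_univ M.edgeSet) Set.finite_univ

lemma matching_ncard_le_mu [Fintype W] {M : SimpleGraph.Subgraph H} (hM : M.IsMatching) :
    M.edgeSet.ncard ≤ muNum H := by
  show _ ≤ sSup {n | ∃ M : SimpleGraph.Subgraph H, M.IsMatching ∧ M.edgeSet.ncard = n}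
  have hb : BddAbove {n | ∃ M : SimpleGraph.Subgraph H, M.IsMatching ∧ M.edgeSet.ncard = n} := by
    apply Set.Finite.bddAbove
    apply Set.Finite.subset (Set.finite_Iic (Nat.card (Sym2 W)))
    rintro n ⟨N, -, rfl⟩
    exact edgeSet_ncard_le H N
  exact le_csSup hb ⟨M, hM, rfl⟩

lemma exists_max_matching [Fintype W] :
    ∃ M : SimpleGraph.Subgraph H, M.IsMatching ∧ M.edgeSet.ncard = muNum H := by
  have hne : {n | ∃ M : SimpleGraph.Subgraph H, M.IsMatching ∧ M.edgeSet.ncard = n}.Nonempty :=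
    ⟨0, ⊥, by simp [SimpleGraph.Subgraph.IsMatching], by simp⟩
  have hfin : {n | ∃ M : SimpleGraph.Subgraph H, M.IsMatching ∧ M.edgeSet.ncard = n}.Finite := by
    apply Set.Finite.subset (Set.finite_Iic (Nat.card (Sym2 W)))
    rintro n ⟨N, -, rfl⟩
    exact edgeSet_ncard_le H N
  exact hne.csSup_mem hfin

lemma diff_mem_Icc [Fintype W] (J : Set W) :
    diffSet H J ∈ Set.Icc (-(Nat.card W : ℤ)) (Nat.card W) := by
  have h1 : (J.ncard : ℤ) ≤ Nat.card W := by exact_mod_cast _root_.ncard_le_card J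
  have h2 : ((nbhd H J).ncard : ℤ) ≤ Nat.card W := by exact_mod_cast _root_.ncard_le_card _
  simp only [diffSet, Set.mem_Icc]
  constructor <;> omega

lemma diff_le_critDiff [Fintype W] {I : Set W} (hI : IsIndep H I) :
    diffSet H I ≤ critDiff H := by
  show _ ≤ sSup {d | ∃ I : Set W, IsIndep H I ∧ diffSet H I = d}
  have hb : BddAbove {d | ∃ I : Set W, IsIndep H I ∧ diffSet H I = d} := by
    apply Set.Finite.bddAbove
    apply Set.Finite.subset (Set.finite_Icc (-(Nat.card W : ℤ)) (Nat.card W))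
    rintro d ⟨J, -, rfl⟩
    exact diff_mem_Icc H J
  exact le_csSup hb ⟨I, hI, rfl⟩

lemma exists_critical [Fintype W] :
    ∃ I : Set W, IsCriticalIndep H I := by
  have hne : {d | ∃ I : Set W, IsIndep H I ∧ diffSet H I = d}.Nonempty :=
    ⟨0, ∅, by simp [IsIndep], by simp [diffSet, nbhd]⟩
  have hfin : {d | ∃ I : Set W, IsIndep H I ∧ diffSet H I = d}.Finite := by
    apply Set.Finite.subset (Set.finite_Icc (-(Nat.card W : ℤ)) (Nat.card W))
    rintro d ⟨J, -, rfl⟩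
    exact diff_mem_Icc H J
  obtain ⟨I, hI, hd⟩ := hne.csSup_mem hfin
  exact ⟨I, hI, hd⟩

end Aux
section Aux2
open Set SimpleGraph

variable {W : Type*} (H : SimpleGraph W)

lemma matching_endpoint_bound [Fintype W] {M : SimpleGraph.Subgraph H} (hM : M.IsMatching)
    {E : Set (Sym2 W)} {T : Set W}
    (h : ∀ e ∈ E, ∃ x, x ∈ T ∧ ∃ y, e = s(x, y) ∧ M.Adj x y) :
    E.ncard ≤ T.ncard := by
  obtain rfl | hEne := E.eq_empty_or_nonempty
  · simp
  have hW : Nonempty W := by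
    obtain ⟨e, he⟩ := hEne; obtain ⟨x, -, -⟩ := h e he; exact ⟨x⟩
  classical
  set c : Sym2 W → W := fun e =>
    if he : ∃ x, x ∈ T ∧ ∃ y, e = s(x, y) ∧ M.Adj x y then he.choose
    else Classical.arbitrary W with hc
  have key : ∀ e ∈ E, c e ∈ T ∧ ∃ y, e = s(c e, y) ∧ M.Adj (c e) y := by
    intro e he
    have hP := h e he
    simp only [hc, dif_pos hP]
    exact ⟨hP.choose_spec.1, hP.choose_spec.2⟩
  apply Set.ncard_le_ncard_of_injOn c (fun e he => (key e he).1) ?_ T.toFinite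
  intro e he e' he' hee
  obtain ⟨-, y, hey, hadj⟩ := key e he
  obtain ⟨-, y', hey', hadj'⟩ := key e' he'
  rw [← hee] at hey' hadj'
  obtain ⟨w, -, hw⟩ := hM (M.edge_vert hadj)
  rw [hey, hey', hw y hadj, hw y' hadj']

lemma alpha_add_mu_le [Fintype W] : alphaNum H + muNum H ≤ Nat.card W := by
  obtain ⟨S, hS, hScard⟩ := exists_max_indep H
  obtain ⟨M, hM, hMcard⟩ := exists_max_matching H
  have hbound : M.edgeSet.ncard ≤ Sᶜ.ncard := by
    apply matching_endpoint_bound H hM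
    intro e
    induction e with
    | _ x y =>
      intro he
      rw [SimpleGraph.Subgraph.mem_edgeSet] at he
      by_cases hx : x ∈ S
      · refine ⟨y, ?_, x, Sym2.eq_swap, he.symm⟩
        intro hy
        exact hS hx hy (M.adj_sub he).ne (M.adj_sub he)
      · exact ⟨x, hx, y, rfl, he⟩
  calc alphaNum H + muNum H = S.ncard + M.edgeSet.ncard := by rw [hScard, hMcard]
    _ ≤ S.ncard + Sᶜ.ncard := by omega
    _ = Nat.card W := Set.ncard_add_ncard_compl S

end Aux2
section Aux3
open Set SimpleGraph

variable {V : Type*} (G : SimpleGraph V)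

lemma indep_disjoint_nbhd {I : Set V} (hI : IsIndep G I) {w : V} (hw : w ∈ I) :
    w ∉ nbhd G I := by
  rintro ⟨a, haI, hadj⟩
  rcases eq_or_ne a w with rfl | hne
  · exact hadj.ne rfl
  · exact hI haI hw hne hadj

lemma alpha_induce_ge [Fintype V] (v : V) [Fintype ↥({v}ᶜ : Set V)] :
    alphaNum G - 1 ≤ alphaNum (G.induce ({v}ᶜ : Set V)) := by
  obtain ⟨S, hS, hScard⟩ := exists_max_indep G
  set S' : Set ↥({v}ᶜ : Set V) := Subtype.val ⁻¹' S with hS'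
  have hind : IsIndep (G.induce ({v}ᶜ : Set V)) S' := by
    intro a ha b hb hab hadj
    simp only [comap_adj, Function.Embedding.coe_subtype] at hadj
    exact hS ha hb (fun h => hab (Subtype.val_injective h)) hadj
  have hcard : S'.ncard = (S \ {v}).ncard := by
    rw [← Set.ncard_image_of_injective S' Subtype.val_injective, hS',
      Set.image_preimage_eq_inter_range, Subtype.range_coe, Set.diff_eq]
  have h1 : S.ncard ≤ (S \ {v}).ncard + 1 := by
    have hsub : S ⊆ (S \ {v}) ∪ {v} := by
      intro x hx; by_cases h : x = v <;> simp [h, hx]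
    calc S.ncard ≤ ((S \ {v}) ∪ {v}).ncard :=
          Set.ncard_le_ncard hsub ((S.toFinite.diff).union (Set.finite_singleton v))
      _ ≤ (S \ {v}).ncard + ({v} : Set V).ncard := Set.ncard_union_le _ _
      _ = (S \ {v}).ncard + 1 := by simp
  have h2 : S'.ncard ≤ alphaNum (G.induce ({v}ᶜ : Set V)) := indep_ncard_le_alpha _ hind
  omega

lemma mem_of_critical {v : V} (hv : v ∈ kerSet G) {A : Set V} (hA : IsCriticalIndep G A) :
    v ∈ A := hv A hA

end Aux3
section Hall
open Set SimpleGraph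

variable {V : Type*} (G : SimpleGraph V)

lemma ncard_le_diff_singleton_add_one (s : Set V) [Fintype V] (a : V) :
    s.ncard ≤ (s \ {a}).ncard + 1 := by
  have hsub : s ⊆ (s \ {a}) ∪ {a} := by
    intro x hx; by_cases h : x = a <;> simp [h, hx]
  calc s.ncard ≤ ((s \ {a}) ∪ {a}).ncard :=
        Set.ncard_le_ncard hsub ((s.toFinite.diff).union (Set.finite_singleton a))
    _ ≤ (s \ {a}).ncard + ({a} : Set V).ncard := Set.ncard_union_le _ _
    _ = (s \ {a}).ncard + 1 := by simp

lemma hall_condition [Fintype V] {I : Set V} (hI : IsCriticalIndep G I) {v : V}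
    (hv : v ∈ kerSet G) (X : Set V) (hX : X ⊆ nbhd G I) :
    X.ncard ≤ ({a ∈ I | ∃ u ∈ X, G.Adj u a} \ {v}).ncard := by
  set Y : Set V := {a ∈ I | ∃ u ∈ X, G.Adj u a} with hY
  set I' : Set V := I \ Y with hI'
  have hYI : Y ⊆ I := fun a ha => ha.1
  have hind : IsIndep G I' := Set.Pairwise.mono Set.diff_subset hI.1
  have hnb : nbhd G I' ⊆ nbhd G I \ X := by
    rintro w ⟨a, ⟨haI, haY⟩, hadj⟩
    refine ⟨⟨a, haI, hadj⟩, fun hwX => haY ⟨haI, w, hwX, hadj.symm⟩⟩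
  -- numeric facts
  have e1 : I'.ncard = I.ncard - Y.ncard := Set.ncard_diff hYI
  have e1' : Y.ncard ≤ I.ncard := Set.ncard_le_ncard hYI I.toFinite
  have e2 : (nbhd G I').ncard ≤ (nbhd G I).ncard - X.ncard := by
    rw [← Set.ncard_diff hX]
    exact Set.ncard_le_ncard hnb ((nbhd G I).toFinite.diff)
  have e2' : X.ncard ≤ (nbhd G I).ncard := Set.ncard_le_ncard hX (nbhd G I).toFinite
  have e3 : diffSet G I' ≤ critDiff G := diff_le_critDiff G hind
  have e4 : (I.ncard : ℤ) - (nbhd G I).ncard = critDiff G := hI.2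
  have e5 : diffSet G I' = (I'.ncard : ℤ) - (nbhd G I').ncard := rfl
  -- first: X.ncard ≤ Y.ncard
  have hXY : X.ncard ≤ Y.ncard := by omega
  by_contra hcon
  push_neg at hcon
  have h6 : Y.ncard ≤ (Y \ {v}).ncard + 1 := ncard_le_diff_singleton_add_one Y v
  have hYX : Y.ncard = X.ncard := by omega
  have hvY : v ∈ Y := by
    by_contra hvY
    rw [Set.diff_singleton_eq_self hvY] at hcon
    omega
  have hcrit : IsCriticalIndep G I' := by
    refine ⟨hind, le_antisymm e3 ?_⟩
    rw [e5]
    omega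
  have : v ∈ I' := hv I' hcrit
  exact this.2 hvY

lemma exists_hall_fun [Fintype V] {I : Set V} (hI : IsCriticalIndep G I) {v : V}
    (hv : v ∈ kerSet G) :
    ∃ f : ↥(nbhd G I) → V, Function.Injective f ∧
      ∀ u : ↥(nbhd G I), f u ∈ I ∧ f u ≠ v ∧ G.Adj ↑u (f u) := by
  classical
  set t : ↥(nbhd G I) → Finset V := fun u =>
    Set.Finite.toFinset (Set.toFinite {a | a ∈ I ∧ a ≠ v ∧ G.Adj ↑u a}) with ht
  have hall : ∀ s : Finset ↥(nbhd G I), s.card ≤ (s.biUnion t).card := by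
    intro s
    have hXsub : (Subtype.val '' (↑s : Set ↥(nbhd G I)) : Set V) ⊆ nbhd G I := by
      rintro x ⟨u, -, rfl⟩; exact u.2
    have hmain := hall_condition G hI hv _ hXsub
    have hXcard : (Subtype.val '' (↑s : Set ↥(nbhd G I))).ncard = s.card := by
      rw [Set.ncard_image_of_injective _ Subtype.val_injective, Set.ncard_coe_finset]
    have hT : ({a ∈ I | ∃ u ∈ Subtype.val '' (↑s : Set ↥(nbhd G I)), G.Adj u a} \ {v} : Set V)
        = ↑(s.biUnion t) := by
      ext a
      simp only [Set.mem_diff, Set.mem_setOf_eq, Set.mem_singleton_iff, Finset.coe_biUnion,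
        Set.mem_iUnion, Finset.mem_coe, ht, Set.Finite.mem_toFinset, Set.mem_image]
      constructor
      · rintro ⟨⟨haI, u, ⟨u', hu', rfl⟩, hadj⟩, hav⟩
        exact ⟨u', hu', haI, hav, hadj⟩
      · rintro ⟨u, hu, haI, hav, hadj⟩
        exact ⟨⟨haI, ↑u, ⟨u, hu, rfl⟩, hadj⟩, hav⟩
    rw [hXcard, hT, Set.ncard_coe_finset] at hmain
    exact hmain
  obtain ⟨f, hfinj, hf⟩ := (Finset.all_card_le_biUnion_card_iff_exists_injective t).mp hall
  refine ⟨f, hfinj, fun u => ?_⟩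
  have := hf u
  rw [ht, Set.Finite.mem_toFinset] at this
  exact this

end Hall
section Constructions
open Set SimpleGraph

variable {V : Type*} {G : SimpleGraph V}

lemma matching_of_fun (s : Set V) (f : V → V)
    (hadj : ∀ u ∈ s, G.Adj u (f u)) (hinj : Set.InjOn f s)
    (hdisj : ∀ u ∈ s, ∀ w ∈ s, f u ≠ w) :
    ∃ M : SimpleGraph.Subgraph G, M.IsMatching ∧ M.verts = s ∪ f '' s ∧
      M.edgeSet = (fun u => s(u, f u)) '' s := by
  refine ⟨{ verts := s ∪ f '' s
            Adj := fun x y => (x ∈ s ∧ f x = y) ∨ (y ∈ s ∧ f y = x)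
            adj_sub := ?_
            edge_vert := ?_
            symm := ?_ }, ?_, rfl, ?_⟩
  · rintro x y (⟨hx, rfl⟩ | ⟨hy, rfl⟩)
    · exact hadj x hx
    · exact (hadj y hy).symm
  · rintro x y (⟨hx, -⟩ | ⟨hy, rfl⟩)
    · exact Or.inl hx
    · exact Or.inr ⟨y, hy, rfl⟩
  · constructor
    rintro x y (⟨hx, rfl⟩ | ⟨hy, rfl⟩)
    · exact Or.inr ⟨hx, rfl⟩
    · exact Or.inl ⟨hy, rfl⟩
  · rintro x (hx | ⟨u, hu, rfl⟩)
    · refine ⟨f x, Or.inl ⟨hx, rfl⟩, ?_⟩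
      rintro y (⟨-, rfl⟩ | ⟨hy, hyx⟩)
      · rfl
      · exact ((hdisj y hy x hx) hyx).elim
    · refine ⟨u, Or.inr ⟨hu, rfl⟩, ?_⟩
      rintro y (⟨hfus, -⟩ | ⟨hy, hyy⟩)
      · exact ((hdisj u hu (f u) hfus) rfl).elim
      · exact hinj hy hu hyy
  · ext e
    induction e with
    | _ x y =>
      rw [SimpleGraph.Subgraph.mem_edgeSet]
      constructor
      · rintro (⟨hx, rfl⟩ | ⟨hy, rfl⟩)
        · exact ⟨x, hx, rfl⟩
        · exact ⟨y, hy, Sym2.eq_swap⟩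
      · rintro ⟨u, hu, he⟩
        simp only at he
        rw [Sym2.eq_iff] at he
        rcases he with ⟨rfl, rfl⟩ | ⟨rfl, rfl⟩
        · exact Or.inl ⟨hu, rfl⟩
        · exact Or.inr ⟨hu, rfl⟩

lemma restrict_matching (s : Set V) (M : SimpleGraph.Subgraph G) (hM : M.IsMatching) :
    ∃ N : SimpleGraph.Subgraph (G.induce s), N.IsMatching ∧
      Sym2.map Subtype.val '' N.edgeSet = {e ∈ M.edgeSet | ∀ x ∈ e, x ∈ s} := by
  refine ⟨{ verts := {a : s | ∃ b : s, M.Adj ↑a ↑b}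
            Adj := fun a b => M.Adj ↑a ↑b
            adj_sub := ?_
            edge_vert := ?_
            symm := ?_ }, ?_, ?_⟩
  · intro a b h
    exact M.adj_sub h
  · intro a b h
    exact ⟨b, h⟩
  · constructor
    intro a b h
    exact h.symm
  · rintro a ⟨b, hb⟩
    obtain ⟨w, hw, huniq⟩ := hM (M.edge_vert hb)
    refine ⟨b, hb, ?_⟩
    rintro y hy
    exact Subtype.val_injective ((huniq ↑y hy).trans (huniq ↑b hb).symm)
  · ext e
    constructor
    · rintro ⟨e', he', rfl⟩
      revert he'
      induction e' with
      | _ a b =>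
        intro he'
        rw [SimpleGraph.Subgraph.mem_edgeSet] at he'
        rw [Sym2.map_pair_eq]
        refine ⟨SimpleGraph.Subgraph.mem_edgeSet.mpr he', ?_⟩
        intro x hx
        rw [Sym2.mem_iff] at hx
        rcases hx with rfl | rfl
        · exact a.2
        · exact b.2
    · induction e with
      | _ x y =>
        rintro ⟨he, hxs⟩
        rw [SimpleGraph.Subgraph.mem_edgeSet] at he
        have hx : x ∈ s := hxs x (Sym2.mem_mk_left x y)
        have hy : y ∈ s := hxs y (Sym2.mem_mk_right x y)
        refine ⟨s(⟨x, hx⟩, ⟨y, hy⟩), SimpleGraph.Subgraph.mem_edgeSet.mpr he, ?_⟩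
        rw [Sym2.map_pair_eq]

lemma lift_matching (s : Set V) (N : SimpleGraph.Subgraph (G.induce s)) (hN : N.IsMatching) :
    ∃ M : SimpleGraph.Subgraph G, M.IsMatching ∧ M.verts = Subtype.val '' N.verts ∧
      M.edgeSet = Sym2.map Subtype.val '' N.edgeSet := by
  refine ⟨{ verts := Subtype.val '' N.verts
            Adj := fun x y => ∃ a b : s, N.Adj a b ∧ ↑a = x ∧ ↑b = y
            adj_sub := ?_
            edge_vert := ?_
            symm := ?_ }, ?_, rfl, ?_⟩
  · rintro x y ⟨a, b, h, rfl, rfl⟩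
    exact N.adj_sub h
  · rintro x y ⟨a, b, h, rfl, rfl⟩
    exact ⟨a, N.edge_vert h, rfl⟩
  · constructor
    rintro x y ⟨a, b, h, rfl, rfl⟩
    exact ⟨b, a, h.symm, rfl, rfl⟩
  · rintro x ⟨a, ha, rfl⟩
    obtain ⟨b, hb, hbu⟩ := hN ha
    refine ⟨↑b, ⟨a, b, hb, rfl, rfl⟩, ?_⟩
    rintro y ⟨a', b', h', ha', rfl⟩
    have : a' = a := Subtype.val_injective ha'
    subst this
    rw [hbu b' h']
  · ext e
    induction e with
    | _ x y =>
      rw [SimpleGraph.Subgraph.mem_edgeSet]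
      constructor
      · rintro ⟨a, b, h, rfl, rfl⟩
        exact ⟨s(a, b), SimpleGraph.Subgraph.mem_edgeSet.mpr h, Sym2.map_pair_eq _ _ _⟩
      · rintro ⟨e', he', hmap⟩
        revert he' hmap
        induction e' with
        | _ a b =>
          intro he' hmap
          rw [SimpleGraph.Subgraph.mem_edgeSet] at he'
          rw [Sym2.map_pair_eq, Sym2.eq_iff] at hmap
          rcases hmap with ⟨rfl, rfl⟩ | ⟨rfl, rfl⟩
          · exact ⟨a, b, he', rfl, rfl⟩
          · exact ⟨b, a, he'.symm, rfl, rfl⟩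

end Constructions
section Main
open Set SimpleGraph

variable {V : Type*}

lemma mu_induce_ge [Fintype V] (G : SimpleGraph V) (v : V) (hv : v ∈ kerSet G)
    [Fintype ↥({v}ᶜ : Set V)] :
    muNum G ≤ muNum (G.induce ({v}ᶜ : Set V)) := by
  classical
  obtain ⟨I, hI⟩ := exists_critical G
  have hvI : v ∈ I := hv I hI
  set s₀ : Set V := nbhd G I with hs₀
  obtain ⟨f, hfinj, hf⟩ := exists_hall_fun G hI hv
  -- the total function extending f
  set F : V → V := fun x => if hx : x ∈ s₀ then f ⟨x, hx⟩ else x with hF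
  have hFval : ∀ x (hx : x ∈ s₀), F x = f ⟨x, hx⟩ := by
    intro x hx; simp only [hF, dif_pos hx]
  have hFI : ∀ x ∈ s₀, F x ∈ I ∧ F x ≠ v := by
    intro x hx; rw [hFval x hx]; exact ⟨(hf ⟨x, hx⟩).1, (hf ⟨x, hx⟩).2.1⟩
  have hadj : ∀ u ∈ s₀, G.Adj u (F u) := by
    intro u hu; rw [hFval u hu]; exact (hf ⟨u, hu⟩).2.2
  have hinjOn : Set.InjOn F s₀ := by
    intro u hu u' hu' he
    rw [hFval u hu, hFval u' hu'] at he
    exact congrArg Subtype.val (hfinj he)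
  have hdisj : ∀ u ∈ s₀, ∀ w ∈ s₀, F u ≠ w := by
    intro u hu w hw he
    exact indep_disjoint_nbhd G hI.1 ((hFI u hu).1) (he ▸ hw)
  obtain ⟨M₁, hM₁, hM₁v, hM₁e⟩ := matching_of_fun s₀ F hadj hinjOn hdisj
  have hM₁card : M₁.edgeSet.ncard = s₀.ncard := by
    rw [hM₁e]
    apply Set.ncard_image_of_injOn
    intro u hu u' hu' he
    simp only [Sym2.eq_iff] at he
    rcases he with ⟨h1, -⟩ | ⟨h1, -⟩
    · exact h1
    · exact ((hdisj u' hu' u hu) h1.symm).elim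
  -- the rest graph
  set K : Set V := I ∪ s₀ with hK
  haveI : Fintype ↥(Kᶜ : Set V) := Fintype.ofFinite _
  obtain ⟨MR, hMR, hMRcard⟩ := exists_max_matching (G.induce (Kᶜ : Set V))
  obtain ⟨M₂, hM₂, hM₂v, hM₂e⟩ := lift_matching Kᶜ MR hMR
  have hM₂card : M₂.edgeSet.ncard = muNum (G.induce (Kᶜ : Set V)) := by
    rw [hM₂e, Set.ncard_image_of_injective _ (Sym2.map.injective Subtype.val_injective), hMRcard]
  -- combine
  have hM₁verts : M₁.verts ⊆ K := by
    rw [hM₁v]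
    rintro x (hx | ⟨u, hu, rfl⟩)
    · exact Or.inr hx
    · exact Or.inl (hFI u hu).1
  have hM₂verts : M₂.verts ⊆ Kᶜ := by
    rw [hM₂v]; rintro x ⟨a, -, rfl⟩; exact a.2
  have hdisjsup : Disjoint M₁.support M₂.support := by
    rw [hM₁.support_eq_verts, hM₂.support_eq_verts]
    exact Set.disjoint_of_subset hM₁verts hM₂verts disjoint_compl_right
  have hMsup : (M₁ ⊔ M₂).IsMatching := hM₁.sup hM₂ hdisjsup
  have hedisj : Disjoint M₁.edgeSet M₂.edgeSet := by
    rw [Set.disjoint_left]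
    intro e he₁ he₂
    rw [hM₁e] at he₁
    rw [hM₂e] at he₂
    obtain ⟨u, hu, rfl⟩ := he₁
    obtain ⟨e', -, hmap⟩ := he₂
    revert hmap
    induction e' with
    | _ a b =>
      intro hmap
      rw [Sym2.map_pair_eq, Sym2.eq_iff] at hmap
      rcases hmap with ⟨h1, -⟩ | ⟨-, h2⟩
      · exact a.2 (h1 ▸ Or.inr hu)
      · exact b.2 (h2 ▸ Or.inr hu)
  have hsupcard : (M₁ ⊔ M₂).edgeSet.ncard = s₀.ncard + muNum (G.induce (Kᶜ : Set V)) := by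
    rw [SimpleGraph.Subgraph.edgeSet_sup,
      Set.ncard_union_eq hedisj M₁.edgeSet.toFinite M₂.edgeSet.toFinite, hM₁card, hM₂card]
  -- lower bound : muNum G ≤ s₀.ncard + muNum rest
  obtain ⟨M, hM, hMcard⟩ := exists_max_matching G
  set E₁ : Set (Sym2 V) := {e ∈ M.edgeSet | ∃ x ∈ K, x ∈ e} with hE₁
  set E₂ : Set (Sym2 V) := {e ∈ M.edgeSet | ∀ x ∈ e, x ∈ Kᶜ} with hE₂
  have hsplit : M.edgeSet.ncard = E₁.ncard + E₂.ncard := by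
    rw [← Set.ncard_union_eq ?_ E₁.toFinite E₂.toFinite]
    · congr 1
      ext e
      simp only [hE₁, hE₂, Set.mem_union, Set.mem_setOf_eq]
      constructor
      · intro he
        by_cases hx : ∃ x ∈ K, x ∈ e
        · exact Or.inl ⟨he, hx⟩
        · push_neg at hx
          exact Or.inr ⟨he, fun x hxe hxK => hx x hxK hxe⟩
      · rintro (⟨he, -⟩ | ⟨he, -⟩) <;> exact he
    · rw [Set.disjoint_left]
      rintro e ⟨-, x, hxK, hxe⟩ ⟨-, hall⟩
      exact hall x hxe hxK
  have hE₁le : E₁.ncard ≤ s₀.ncard := by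
    apply matching_endpoint_bound G hM
    intro e
    induction e with
    | _ x y =>
      rintro ⟨he, z, hzK, hze⟩
      rw [SimpleGraph.Subgraph.mem_edgeSet] at he
      rw [Sym2.mem_iff] at hze
      have main : ∀ x y : V, M.Adj x y → x ∈ K →
          ∃ c, c ∈ s₀ ∧ ∃ d, s(x, y) = s(c, d) ∧ M.Adj c d := by
        intro x y hxy hxK
        rcases hxK with hxI | hxs
        · refine ⟨y, ⟨x, hxI, M.adj_sub hxy⟩, x, Sym2.eq_swap, hxy.symm⟩
        · exact ⟨x, hxs, y, rfl, hxy⟩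
      rcases hze with rfl | rfl
      · exact main z y he hzK
      · obtain ⟨c, hc, d, hcd, hadj'⟩ := main z x he.symm hzK
        exact ⟨c, hc, d, Sym2.eq_swap.trans hcd, hadj'⟩
  have hE₂le : E₂.ncard ≤ muNum (G.induce (Kᶜ : Set V)) := by
    obtain ⟨N, hN, hNe⟩ := restrict_matching Kᶜ M hM
    have : E₂.ncard = N.edgeSet.ncard := by
      rw [hE₂, ← hNe, Set.ncard_image_of_injective _ (Sym2.map.injective Subtype.val_injective)]
    rw [this]
    exact matching_ncard_le_mu _ hN
  have hlow : muNum G ≤ s₀.ncard + muNum (G.induce (Kᶜ : Set V)) := by omega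
  -- transfer to G - v
  have hvnot : v ∉ (M₁ ⊔ M₂).verts := by
    rw [SimpleGraph.Subgraph.verts_sup]
    rintro (h | h)
    · rw [hM₁v] at h
      rcases h with h | ⟨u, hu, hFu⟩
      · exact indep_disjoint_nbhd G hI.1 hvI h
      · exact (hFI u hu).2 hFu
    · exact hM₂verts h (Or.inl hvI)
  obtain ⟨N', hN', hN'e⟩ := restrict_matching ({v}ᶜ : Set V) (M₁ ⊔ M₂) hMsup
  have hNfull : Sym2.map Subtype.val '' N'.edgeSet = (M₁ ⊔ M₂).edgeSet := by
    rw [hN'e]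
    ext e
    simp only [Set.mem_setOf_eq, Set.mem_compl_iff, Set.mem_singleton_iff]
    constructor
    · rintro ⟨he, -⟩; exact he
    · intro he
      refine ⟨he, fun x hxe hxv => ?_⟩
      subst hxv
      exact hvnot (SimpleGraph.Subgraph.mem_verts_of_mem_edge he hxe)
  have hN'card : N'.edgeSet.ncard = (M₁ ⊔ M₂).edgeSet.ncard := by
    rw [← hNfull, Set.ncard_image_of_injective _ (Sym2.map.injective Subtype.val_injective)]
  calc muNum G ≤ s₀.ncard + muNum (G.induce (Kᶜ : Set V)) := hlow
    _ = N'.edgeSet.ncard := by rw [hN'card, hsupcard]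
    _ ≤ muNum (G.induce ({v}ᶜ : Set V)) := matching_ncard_le_mu _ hN'

end Main
theorem stmt_16 [Fintype V] (G : SimpleGraph V) (hKE : KonigEgervary G) (v : V)
    (hv : v ∈ kerSet G) :
    KonigEgervary (G.induce ({v}ᶜ : Set V)) := by
  classical
  haveI : Fintype ↥({v}ᶜ : Set V) := Fintype.ofFinite _
  have h1 := alpha_add_mu_le (G.induce ({v}ᶜ : Set V))
  have h2 := alpha_induce_ge G v
  have h3 := mu_induce_ge G v hv
  have h4 : 1 ≤ alphaNum G := by
    have hind : IsIndep G {v} := by simp [IsIndep]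
    have := indep_ncard_le_alpha G hind
    simpa using this
  have h5 : Nat.card ↥({v}ᶜ : Set V) = Nat.card V - 1 := by
    rw [Nat.card_coe_set_eq]
    have := Set.ncard_add_ncard_compl ({v} : Set V)
    simp only [Set.ncard_singleton] at this
    omega
  unfold KonigEgervary at hKE ⊢
  omega
end
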